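/- DQAT redundancy: let Ψ = Π : φ be a DQBF, C a compatible clause, and V' = dep(C). If abs(Π : φ ∧ ¬C, V') is unsatisfiable (in particular if unit propagation with universal reduction derives a conflict), then Π : φ and Π : φ ∧ C are equivalent; hence C can be deleted from or added to the formula without changing its set of Skolem functions. -/

import Mathlib

/- Formalization of DQBF (dependency quantified Boolean formulas),
   Skolem-function semantics, abstraction, and clause operations. -/

attribute [local instance] Classical.propDecidable

namespace DQBFPaper

/-- An assignment of Boolean values to the variables. -/
abbrev Assignment (V : Type) := V → Bool

/-- A DQBF over variables `V`: the variables in `exVars` are existential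
    (with dependency sets given by `dep`), the others are universal;
    `matrix` is the quantifier-free part. -/
structure DQBF (V : Type) where
  exVars : Set V
  dep : V → Set V
  matrix : Assignment V → Prop

/-- A literal: a variable together with a polarity (`true` = positive). -/
abbrev Lit (V : Type) := V × Bool

/-- Evaluation of a literal under an assignment. -/
def Lit.eval {V : Type} (a : Assignment V) (l : Lit V) : Bool :=
  if l.2 then a l.1 else !a l.1

/-- Negation of a literal. -/
def Lit.neg {V : Type} (l : Lit V) : Lit V := (l.1, !l.2)

/-- A clause: a set of literals (interpreted disjunctively). -/
abbrev Clause (V : Type) := Set (Lit V)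

/-- A clause is true iff some literal in it is true. -/
def Clause.eval {V : Type} (a : Assignment V) (C : Clause V) : Prop :=
  ∃ l ∈ C, Lit.eval a l = true

/-- A clause is non-tautological if no variable occurs with both polarities. -/
def NonTaut {V : Type} (C : Clause V) : Prop :=
  ∀ v : V, ¬((v, true) ∈ C ∧ (v, false) ∈ C)

namespace DQBF

variable {V : Type}

/-- The universal variables of a DQBF. -/
def univVars (Ψ : DQBF V) : Set V := Ψ.exVarsᶜ

/-- Well-formedness: dependency sets of existential variables consist of
    universal variables only. -/
def WellFormed (Ψ : DQBF V) : Prop :=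
  ∀ y ∈ Ψ.exVars, Ψ.dep y ⊆ Ψ.exVarsᶜ

/-- Substituting candidate Skolem functions `s` for the existential variables,
    given an assignment `a` of the universal variables. -/
noncomputable def subst (Ψ : DQBF V) (s : V → Assignment V → Bool)
    (a : Assignment V) : Assignment V :=
  fun v => if v ∈ Ψ.exVars then s v a else a v

/-- `s` respects the dependency sets: the value of each existential variable
    only depends on the assignment of its dependency set. -/
def Respects (Ψ : DQBF V) (s : V → Assignment V → Bool) : Prop :=
  ∀ y ∈ Ψ.exVars, ∀ a b : Assignment V, (∀ x ∈ Ψ.dep y, a x = b x) → s y a = s y b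

/-- `s` is a Skolem function for `Ψ`: it respects the dependencies and
    substituting it turns the matrix into a tautology. -/
def IsSkolem (Ψ : DQBF V) (s : V → Assignment V → Bool) : Prop :=
  Ψ.Respects s ∧ ∀ a : Assignment V, Ψ.matrix (Ψ.subst s a)

/-- A DQBF is satisfiable iff it has a Skolem function. -/
def Satisfiable (Ψ : DQBF V) : Prop := ∃ s, Ψ.IsSkolem s

/-- Two DQBFs (over the same prefix) are equivalent iff they have exactly the
    same Skolem functions. -/
def Equivalent (Ψ₁ Ψ₂ : DQBF V) : Prop := ∀ s, Ψ₁.IsSkolem s ↔ Ψ₂.IsSkolem s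

/-- Equi-satisfiability. -/
def EquiSat (Ψ₁ Ψ₂ : DQBF V) : Prop := Ψ₁.Satisfiable ↔ Ψ₂.Satisfiable

/-- Abstraction w.r.t. a set `V'` of universal variables: each variable of `V'`
    becomes existential with empty dependency set (and is removed from all
    dependency sets); the matrix is unchanged. -/
noncomputable def abst (Ψ : DQBF V) (V' : Set V) : DQBF V where
  exVars := Ψ.exVars ∪ V'
  dep := fun v => if v ∈ V' then ∅ else Ψ.dep v \ V'
  matrix := Ψ.matrix

/-- Conjoin a clause to the matrix. -/
def addClause (Ψ : DQBF V) (C : Clause V) : DQBF V :=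
  { Ψ with matrix := fun a => Ψ.matrix a ∧ Clause.eval a C }

/-- Conjoin the negation of a clause (i.e. the unit clauses negating each of
    its literals) to the matrix. -/
def addNegClause (Ψ : DQBF V) (C : Clause V) : DQBF V :=
  { Ψ with matrix := fun a => Ψ.matrix a ∧ ∀ l ∈ C, Lit.eval a l = false }

/-- Generalized dependencies: `dep v = {v}` for universal `v`,
    `dep v = D_v` for existential `v`. -/
noncomputable def depVar (Ψ : DQBF V) (v : V) : Set V :=
  if v ∈ Ψ.exVars then Ψ.dep v else {v}

/-- Dependencies of a literal. -/
noncomputable def depLit (Ψ : DQBF V) (l : Lit V) : Set V := Ψ.depVar l.1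

/-- Dependencies of a clause. -/
noncomputable def depClause (Ψ : DQBF V) (C : Clause V) : Set V :=
  ⋃ l ∈ C, Ψ.depLit l

/-- Under the Skolem candidate `s`, the literal `l` is constantly true,
    i.e. true for every assignment of the universal variables. -/
noncomputable def ConstTrue (Ψ : DQBF V) (s : V → Assignment V → Bool)
    (l : Lit V) : Prop :=
  ∀ a : Assignment V, Lit.eval (Ψ.subst s a) l = true

/-- A DQBF with a CNF matrix given by a set of clauses. -/
def mkCNF (exVars : Set V) (dep : V → Set V) (φ : Set (Clause V)) : DQBF V :=
  ⟨exVars, dep, fun a => ∀ C ∈ φ, Clause.eval a C⟩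

/-- Universal reduction of a clause: remove every universal literal on which
    no existential literal of the clause depends. -/
def urClause (Ψ : DQBF V) (C : Clause V) : Clause V :=
  C \ {l | l.1 ∉ Ψ.exVars ∧ ∀ k ∈ C, k.1 ∈ Ψ.exVars → l.1 ∉ Ψ.dep k.1}

/-- Outer variables of an existential variable `v`. -/
noncomputable def ovEx (Ψ : DQBF V) (v : V) : Set V :=
  {w | Ψ.depVar w ⊆ Ψ.depVar v}

/-- The kernel of a universal variable `v`. -/
def kernel (Ψ : DQBF V) (v : V) : Set V :=
  ⋂ y ∈ {y | y ∈ Ψ.exVars ∧ v ∈ Ψ.dep y}, Ψ.dep y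

/-- Outer variables of a universal variable `v`. -/
def ovUniv (Ψ : DQBF V) (v : V) : Set V :=
  Ψ.kernel v ∪ {y | y ∈ Ψ.exVars ∧ v ∉ Ψ.dep y ∧ Ψ.dep y ⊆ Ψ.kernel v}

/-- The outer clause of `D` w.r.t. a set of outer variables. -/
def OC (D : Clause V) (OV : Set V) : Clause V := {k ∈ D | k.1 ∈ OV}

/-- Outer resolvent for an existential pivot literal `l ∈ C`. -/
noncomputable def orEx (Ψ : DQBF V) (C D : Clause V) (l : Lit V) : Clause V :=
  C ∪ (OC D (Ψ.ovEx l.1) \ {Lit.neg l})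

/-- Outer resolvent for a universal pivot literal `l ∈ C`. -/
def orUniv (Ψ : DQBF V) (C D : Clause V) (l : Lit V) : Clause V :=
  (C \ {l}) ∪ OC D (Ψ.ovUniv l.1)

/-- Outer resolvent (case split on the quantifier type of the pivot). -/
noncomputable def orRes (Ψ : DQBF V) (C D : Clause V) (l : Lit V) : Clause V :=
  if l.1 ∈ Ψ.exVars then Ψ.orEx C D l else Ψ.orUniv C D l

end DQBF

end DQBFPaper

namespace DQBFPaper
open DQBF

/-- DQAT redundancy: with `V' = dep(C)`, if
`abs(Π : φ ∧ ¬C, V')` is unsatisfiable, then `Π : φ` and `Π : φ ∧ C` are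
equivalent, so `C` can be deleted or added without changing the Skolem
functions. -/
theorem dqat_redundant {V : Type} (Ψ : DQBF V) (C : Clause V)
    (hwf : Ψ.WellFormed)
    (h : ¬ ((Ψ.addNegClause C).abst (Ψ.depClause C)).Satisfiable) :
    Ψ.Equivalent (Ψ.addClause C) := by
  classical
  intro s
  constructor
  · intro hs
    refine ⟨hs.1, fun a => ⟨hs.2 a, ?_⟩⟩
    by_contra hC
    apply h
    set V' := Ψ.depClause C with hV'
    -- V' consists of universal variables only
    have hVu : ∀ x ∈ V', x ∉ Ψ.exVars := by
      intro x hx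
      simp only [hV', DQBF.depClause, DQBF.depLit, DQBF.depVar,
        Set.mem_iUnion] at hx
      obtain ⟨l, hl, hx⟩ := hx
      by_cases hu : l.1 ∈ Ψ.exVars
      · rw [if_pos hu] at hx; exact hwf l.1 hu hx
      · rw [if_neg hu] at hx
        simp only [Set.mem_singleton_iff] at hx; subst hx; exact hu
    set a₀ := Ψ.subst s a with ha₀
    -- every literal of C is false under a₀
    have hCfalse : ∀ l ∈ C, Lit.eval a₀ l = false := by
      intro l hl
      by_contra hne
      exact hC ⟨l, hl, by simp at hne; exact hne⟩
    -- dep of a literal of C is inside V'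
    have hdepV' : ∀ l ∈ C, Ψ.depVar l.1 ⊆ V' := by
      intro l hl x hx
      simp only [hV', DQBF.depClause, DQBF.depLit, Set.mem_iUnion]
      exact ⟨l, hl, hx⟩
    refine ⟨fun v b => if v ∈ V' then a₀ v
        else s v (fun x => if x ∈ V' then a₀ x else b x), ?_, ?_⟩
    · -- Respects
      intro y hy b c hbc
      by_cases hyV : y ∈ V'
      · simp [hyV]
      · simp only [if_neg hyV]
        have hyE : y ∈ Ψ.exVars := by
          rcases hy with hy | hy
          · exact hy
          · exact absurd hy hyV
        apply hs.1 y hyE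
        intro x hx
        by_cases hxV : x ∈ V'
        · simp [hxV]
        · simp only [if_neg hxV]
          apply hbc
          simpa [DQBF.abst, DQBF.addNegClause, hyV, hxV] using hx
    · -- matrix holds
      intro b
      set c : Assignment V := fun x => if x ∈ V' then a₀ x else b x with hc
      have hagree : ∀ x ∈ V', c x = a x := by
        intro x hx
        simp only [hc, if_pos hx, ha₀, DQBF.subst, if_neg (hVu x hx)]
      have hsubst :
          ((Ψ.addNegClause C).abst V').subst
            (fun v b => if v ∈ V' then a₀ v
              else s v (fun x => if x ∈ V' then a₀ x else b x)) b
          = Ψ.subst s c := by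
        funext v
        simp only [DQBF.subst, DQBF.abst, DQBF.addNegClause, Set.mem_union]
        by_cases hvV : v ∈ V'
        · simp only [hvV, or_true, if_true, if_pos hvV, ha₀, DQBF.subst,
            if_neg (hVu v hvV), hc]
        · by_cases hvE : v ∈ Ψ.exVars
          · simp [hvE, hvV, hc]
          · simp [hvE, hvV, hc]
      rw [hsubst]
      have hvals : ∀ l ∈ C, (Ψ.subst s c) l.1 = a₀ l.1 := by
        intro l hl
        by_cases hE : l.1 ∈ Ψ.exVars
        · have : s l.1 c = s l.1 a := by
            apply hs.1 l.1 hE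
            intro x hx
            apply hagree
            apply hdepV' l hl
            simp [DQBF.depVar, hE, hx]
          simp only [DQBF.subst, if_pos hE, this, ha₀]
        · have hlV : l.1 ∈ V' := by
            apply hdepV' l hl
            simp [DQBF.depVar, hE]
          simp only [DQBF.subst, if_neg hE]
          rw [hagree l.1 hlV, ha₀, DQBF.subst, if_neg hE]
      refine ⟨hs.2 c, ?_⟩
      intro l hl
      have := hCfalse l hl
      simp only [Lit.eval, hvals l hl] at *
      exact this
  · intro hs
    exact ⟨hs.1, fun a => (hs.2 a).1⟩

end DQBFPaper
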